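/- arXiv:1001.0207 — 6 statements merged into one kernel-verified Lean document; each statement's English description precedes it below -/
import Mathlib

section
/- Let k ≥ 2 and let (a_1, ..., a_k) be a k-tuple of positive integers with gcd(a_1, ..., a_k) = 1, and let j ≥ 0. If f_j(a_1, ..., a_k) is nonzero, then there exist positive integers x_2, ..., x_k such that f_j(a_1, ..., a_k) = Σ_{i=2}^k a_i x_i; that is, f_j(a_1, ..., a_k) admits a representation in which the coefficient of a_1 is zero and all remaining coefficients are strictly positive. -/
/-- The number of positive representations of `M` by the tuple `a`, i.e. the number of
tuples `x` of positive integers with `M = ∑ i, a i * x i`. -/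
noncomputable def posRepCount {k : ℕ} (a : Fin k → ℕ) (M : ℕ) : ℕ :=
  Nat.card {x : Fin k → ℕ // (∀ i, 0 < x i) ∧ ∑ i, a i * x i = M}

/-- `fFrob a j` is the greatest integer with exactly `j` positive representations
by `a` if such an integer exists, and `0` otherwise. -/
noncomputable def fFrob {k : ℕ} (a : Fin k → ℕ) (j : ℕ) : ℕ :=
  sSup {M : ℕ | posRepCount a M = j}

private lemma sum_split_zero {n : ℕ} (a x : Fin (n + 2) → ℕ) :
    ∑ i, a i * x i = a 0 * x 0 + ∑ i ∈ Finset.univ.erase 0, a i * x i :=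
  (Finset.add_sum_erase Finset.univ (fun i => a i * x i) (Finset.mem_univ 0)).symm

private lemma sum_erase_update {n : ℕ} (a x : Fin (n + 2) → ℕ) (v : ℕ) :
    ∑ i ∈ Finset.univ.erase 0, a i * Function.update x 0 v i
      = ∑ i ∈ Finset.univ.erase 0, a i * x i := by
  refine Finset.sum_congr rfl fun i hi => ?_
  rw [Function.update_of_ne (Finset.ne_of_mem_erase hi)]

/-- Lemma 2: if `f_j(a_1, …, a_k)` is nonzero, it admits a representation with
coefficient of `a_1` equal to zero and all remaining coefficients positive. -/
theorem fFrob_rep_without_first (n : ℕ) (a : Fin (n + 2) → ℕ) (ha : ∀ i, 0 < a i)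
    (hgcd : Finset.univ.gcd a = 1) (j : ℕ) (hne : fFrob a j ≠ 0) :
    ∃ x : Fin (n + 2) → ℕ, (∀ i, i ≠ 0 → 0 < x i) ∧
      fFrob a j = ∑ i ∈ Finset.univ.erase 0, a i * x i := by
  classical
  have ha0 := ha 0
  set S : Set ℕ := {M : ℕ | posRepCount a M = j} with hSdef
  have hFS : fFrob a j = sSup S := rfl
  have hbdd : BddAbove S := by
    by_contra h
    exact hne (dif_neg fun ⟨m, hm⟩ => h ⟨m, fun b hb => hm b hb⟩)
  have hSne : S.Nonempty := by
    by_contra h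
    rw [Set.not_nonempty_iff_eq_empty] at h
    apply hne
    rw [hFS, h, csSup_empty]
    rfl
  have hmem : fFrob a j ∈ S := hFS ▸ Nat.sSup_mem hSne hbdd
  have hcount : posRepCount a (fFrob a j) = j := hmem
  set F := fFrob a j with hF
  have hgt : posRepCount a (F + a 0) ≠ j := by
    intro h
    have : F + a 0 ≤ sSup S := le_csSup hbdd h
    rw [← hFS] at this
    omega
  by_contra hcon
  push_neg at hcon
  -- there is no positive representation of `F + a 0` with coefficient `1` at `0`
  have hno : ∀ y : Fin (n + 2) → ℕ, (∀ i, 0 < y i) → ∑ i, a i * y i = F + a 0 →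
      y 0 ≠ 1 := by
    intro y hy hsum hy0
    have hsplit := sum_split_zero a y
    rw [hsum, hy0, mul_one] at hsplit
    exact absurd (by omega : F = ∑ i ∈ Finset.univ.erase 0, a i * y i)
      (hcon y (fun i hi => hy i))
  -- build an equivalence between representations of `F` and of `F + a 0`
  have e : {x : Fin (n + 2) → ℕ // (∀ i, 0 < x i) ∧ ∑ i, a i * x i = F} ≃
      {y : Fin (n + 2) → ℕ // (∀ i, 0 < y i) ∧ ∑ i, a i * y i = F + a 0} := by
    refine
      { toFun := fun x => ⟨Function.update x.1 0 (x.1 0 + 1), ?_, ?_⟩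
        invFun := fun y => ⟨Function.update y.1 0 (y.1 0 - 1), ?_, ?_⟩
        left_inv := ?_
        right_inv := ?_ }
    · intro i
      rcases eq_or_ne i 0 with rfl | hi
      · rw [Function.update_self]; omega
      · rw [Function.update_of_ne hi]; exact x.2.1 i
    · rw [sum_split_zero a, Function.update_self, sum_erase_update]
      have := sum_split_zero a x.1
      rw [x.2.2] at this
      rw [Nat.mul_add, mul_one]
      omega
    · intro i
      rcases eq_or_ne i 0 with rfl | hi
      · rw [Function.update_self]
        have h1 := y.2.1 0
        have h2 := hno y.1 y.2.1 y.2.2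
        omega
      · rw [Function.update_of_ne hi]; exact y.2.1 i
    · rw [sum_split_zero a, Function.update_self, sum_erase_update]
      have h1 := y.2.1 0
      have h2 := hno y.1 y.2.1 y.2.2
      have hsplit := sum_split_zero a y.1
      rw [y.2.2] at hsplit
      have hy2 : 2 ≤ y.1 0 := by omega
      have : a 0 * (y.1 0 - 1) = a 0 * y.1 0 - a 0 := by
        rw [Nat.mul_sub_one]
      have hle : a 0 ≤ a 0 * y.1 0 := Nat.le_mul_of_pos_right _ (y.2.1 0)
      omega
    · intro x
      ext i
      rcases eq_or_ne i 0 with rfl | hi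
      · simp
      · simp [Function.update_of_ne hi]
    · intro y
      ext i
      rcases eq_or_ne i 0 with rfl | hi
      · simp only [Function.update_self]
        have h1 := y.2.1 0
        omega
      · simp [Function.update_of_ne hi]
  have : posRepCount a F = posRepCount a (F + a 0) := Nat.card_congr e
  rw [hcount] at this
  exact hgt this.symm
end

section
/- Let k ≥ 2, let (a_1, ..., a_k) be a k-tuple of positive integers with gcd(a_1, ..., a_k) = 1, let d = gcd(a_2, ..., a_k), and let j ≥ 0. Then f_j(a_1, a_2, ..., a_k) = d·f_j(a_1, a_2/d, ..., a_k/d). -/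
/-- auxiliary map: stretch the first coordinate -/
def stretchAux (d r0 : ℕ) {k : ℕ} (y : Fin (k + 1) → ℕ) : Fin (k + 1) → ℕ :=
  fun i => if i = 0 then d * y 0 - r0 else y i

lemma stretchAux_zero (d r0 : ℕ) {k : ℕ} (y : Fin (k + 1) → ℕ) :
    stretchAux d r0 y 0 = d * y 0 - r0 := if_pos rfl

lemma stretchAux_succ (d r0 : ℕ) {k : ℕ} (y : Fin (k + 1) → ℕ) (j : Fin k) :
    stretchAux d r0 y j.succ = y j.succ := if_neg (Fin.succ_ne_zero j)

/-- auxiliary map: shrink the first coordinate -/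
def shrinkAux (d r0 : ℕ) {k : ℕ} (x : Fin (k + 1) → ℕ) : Fin (k + 1) → ℕ :=
  fun i => if i = 0 then (x 0 + r0) / d else x i

lemma shrinkAux_zero (d r0 : ℕ) {k : ℕ} (x : Fin (k + 1) → ℕ) :
    shrinkAux d r0 x 0 = (x 0 + r0) / d := if_pos rfl

lemma shrinkAux_succ (d r0 : ℕ) {k : ℕ} (x : Fin (k + 1) → ℕ) (j : Fin k) :
    shrinkAux d r0 x j.succ = x j.succ := if_neg (Fin.succ_ne_zero j)

lemma lemKey {n : ℕ} (a : Fin (n + 2) → ℕ) (d : ℕ) (hd0 : 0 < d)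
    (hdvd : ∀ i : Fin (n + 2), i ≠ 0 → d ∣ a i)
    (hcop : Nat.Coprime (a 0) d) (M r0 : ℕ) (hr : r0 < d)
    (hM : d ∣ M + a 0 * r0) :
    posRepCount (fun i => if i = 0 then a i else a i / d) ((M + a 0 * r0) / d)
      = posRepCount a M := by
  set b : Fin (n + 2) → ℕ := fun i => if i = 0 then a i else a i / d with hb
  set N := (M + a 0 * r0) / d with hN
  have hdN : d * N = M + a 0 * r0 := Nat.mul_div_cancel' hM
  have hbsum : ∀ y : Fin (n + 2) → ℕ,
      d * (∑ i, b i * y i) = a 0 * y 0 * d + ∑ j : Fin (n + 1), a j.succ * y j.succ := by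
    intro y
    rw [Fin.sum_univ_succ, Nat.mul_add, Finset.mul_sum]
    congr 1
    · have hb0 : b 0 = a 0 := if_pos rfl
      rw [hb0]; ring
    · apply Finset.sum_congr rfl
      intro j _
      have h1 : b j.succ = a j.succ / d := if_neg (Fin.succ_ne_zero j)
      rw [h1, ← mul_assoc, Nat.mul_div_cancel' (hdvd j.succ (Fin.succ_ne_zero j))]
  have hmemA : ∀ y : Fin (n + 2) → ℕ, (∀ i, 0 < y i) → (∑ i, b i * y i = N) →
      (∀ i, 0 < stretchAux d r0 y i) ∧ ∑ i, a i * stretchAux d r0 y i = M := by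
    intro y hpos hsum
    have hy0 : d ≤ d * y 0 := Nat.le_mul_of_pos_right d (hpos 0)
    constructor
    · intro i
      induction i using Fin.cases with
      | zero => rw [stretchAux_zero]; omega
      | succ j => rw [stretchAux_succ]; exact hpos j.succ
    · have h2 : a 0 * y 0 * d + (∑ j : Fin (n + 1), a j.succ * y j.succ) = M + a 0 * r0 := by
        rw [← hbsum y, hsum, hdN]
      rw [Fin.sum_univ_succ]
      simp only [stretchAux_succ]
      rw [stretchAux_zero, Nat.mul_sub]
      have h5 : a 0 * (d * y 0) = a 0 * y 0 * d := by ring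
      have h6 : a 0 * r0 ≤ a 0 * (d * y 0) := Nat.mul_le_mul_left _ (le_trans hr.le hy0)
      omega
  unfold posRepCount
  apply Nat.card_congr
  refine Equiv.ofBijective
    (fun y : {y : Fin (n + 2) → ℕ // (∀ i, 0 < y i) ∧ ∑ i, b i * y i = N} =>
      (⟨stretchAux d r0 y.1, hmemA y.1 y.2.1 y.2.2⟩ :
        {x : Fin (n + 2) → ℕ // (∀ i, 0 < x i) ∧ ∑ i, a i * x i = M})) ⟨?_, ?_⟩
  · rintro ⟨y, hy⟩ ⟨y', hy'⟩ h
    simp only [Subtype.mk.injEq] at h ⊢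
    funext i
    rcases eq_or_ne i 0 with hi | hi
    · subst hi
      have h0 := congrFun h 0
      rw [stretchAux_zero, stretchAux_zero] at h0
      have hy0 : d ≤ d * y 0 := Nat.le_mul_of_pos_right d (hy.1 0)
      have hy0' : d ≤ d * y' 0 := Nat.le_mul_of_pos_right d (hy'.1 0)
      have : d * y 0 = d * y' 0 := by omega
      exact Nat.eq_of_mul_eq_mul_left hd0 this
    · obtain ⟨j, rfl⟩ := Fin.exists_succ_eq.mpr hi
      have h0 := congrFun h j.succ
      rwa [stretchAux_succ, stretchAux_succ] at h0
  · rintro ⟨x, hxpos, hxsum⟩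
    have hS : d ∣ ∑ j : Fin (n + 1), a j.succ * x j.succ :=
      Finset.dvd_sum fun j _ => (hdvd j.succ (Fin.succ_ne_zero j)).mul_right _
    obtain ⟨s, hs⟩ := hS
    have hx : a 0 * x 0 + ∑ j : Fin (n + 1), a j.succ * x j.succ = M := by
      rw [Fin.sum_univ_succ] at hxsum; exact hxsum
    have hd1 : d ∣ a 0 * (x 0 + r0) := by
      have h7 : a 0 * (x 0 + r0) = (M + a 0 * r0) - d * s := by
        rw [← hs]; have : a 0 * (x 0 + r0) = a 0 * x 0 + a 0 * r0 := by ring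
        omega
      rw [h7]
      exact Nat.dvd_sub hM (Dvd.intro s rfl)
    have hd2 : d ∣ x 0 + r0 := (Nat.Coprime.dvd_of_dvd_mul_left hcop.symm) hd1
    have hxr : d ≤ x 0 + r0 := Nat.le_of_dvd (by have := hxpos 0; omega) hd2
    refine ⟨⟨shrinkAux d r0 x, ?_, ?_⟩, ?_⟩
    · intro i
      induction i using Fin.cases with
      | zero => rw [shrinkAux_zero]; exact Nat.div_pos hxr hd0
      | succ j => rw [shrinkAux_succ]; exact hxpos j.succ
    · apply Nat.eq_of_mul_eq_mul_left hd0
      rw [hbsum, hdN]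
      simp only [shrinkAux_succ]
      rw [shrinkAux_zero]
      have h9 : a 0 * ((x 0 + r0) / d) * d = a 0 * (x 0 + r0) := by
        rw [mul_assoc, Nat.div_mul_cancel hd2]
      have h11 : a 0 * (x 0 + r0) = a 0 * x 0 + a 0 * r0 := by ring
      omega
    · apply Subtype.ext
      show stretchAux d r0 (shrinkAux d r0 x) = x
      funext i
      induction i using Fin.cases with
      | zero =>
        rw [stretchAux_zero, shrinkAux_zero, Nat.mul_div_cancel' hd2]
        omega
      | succ j => rw [stretchAux_succ, shrinkAux_succ]

/-- Theorem 3: `f_j(a_1, a_2, …, a_k) = d · f_j(a_1, a_2/d, …, a_k/d)`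
where `d = gcd(a_2, …, a_k)`. -/
theorem fFrob_scaling (n : ℕ) (a : Fin (n + 2) → ℕ) (ha : ∀ i, 0 < a i)
    (hgcd : Finset.univ.gcd a = 1)
    (d : ℕ) (hd : d = (Finset.univ.erase 0).gcd a) (j : ℕ) :
    fFrob a j = d * fFrob (fun i => if i = 0 then a i else a i / d) j := by
  set b : Fin (n + 2) → ℕ := fun i => if i = 0 then a i else a i / d with hb
  have hdvd : ∀ i : Fin (n + 2), i ≠ 0 → d ∣ a i := by
    intro i hi
    rw [hd]
    exact Finset.gcd_dvd (Finset.mem_erase.mpr ⟨hi, Finset.mem_univ _⟩)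
  have h10 : (1 : Fin (n + 2)) ≠ 0 := by
    simp [Fin.ext_iff]
  have hd0 : 0 < d := by
    rcases Nat.eq_zero_or_pos d with h | h
    · exfalso
      have := hdvd 1 h10
      rw [h, zero_dvd_iff] at this
      exact (ha 1).ne' this
    · exact h
  have hcop : Nat.Coprime (a 0) d := by
    have huniv : (Finset.univ : Finset (Fin (n + 2))) = insert 0 (Finset.univ.erase 0) :=
      (Finset.insert_erase (Finset.mem_univ 0)).symm
    rw [huniv, Finset.gcd_insert, ← hd] at hgcd
    exact hgcd
  have hex : ∀ M : ℕ, ∃ r0, r0 < d ∧ d ∣ M + a 0 * r0 := by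
    intro M
    haveI : NeZero d := ⟨hd0.ne'⟩
    refine ⟨((-(M : ZMod d)) * (a 0 : ZMod d)⁻¹).val, ZMod.val_lt _, ?_⟩
    rw [← ZMod.natCast_eq_zero_iff]
    push_cast
    rw [ZMod.natCast_val, ZMod.cast_id]
    have h1 : ((a 0 : ZMod d)) * (a 0 : ZMod d)⁻¹ = 1 := ZMod.coe_mul_inv_eq_one _ hcop
    linear_combination (-(M : ZMod d)) * h1
  have dir1 : ∀ N, posRepCount b N = j → posRepCount a (d * N) = j := by
    intro N hN
    have h := lemKey a d hd0 hdvd hcop (d * N) 0 hd0 (by simp)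
    rw [← h]
    have : (d * N + a 0 * 0) / d = N := by
      simp [Nat.mul_div_cancel_left _ hd0]
    rw [this]
    exact hN
  have dir2 : ∀ M, posRepCount a M = j → ∃ N, M ≤ d * N ∧ posRepCount b N = j := by
    intro M hM
    obtain ⟨r0, hr, hdv⟩ := hex M
    refine ⟨(M + a 0 * r0) / d, ?_, ?_⟩
    · rw [Nat.mul_div_cancel' hdv]; exact Nat.le_add_right _ _
    · rw [lemKey a d hd0 hdvd hcop M r0 hr hdv]; exact hM
  unfold fFrob
  set Sa := {M | posRepCount a M = j} with hSa
  set Sb := {N | posRepCount b N = j} with hSb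
  rcases Set.eq_empty_or_nonempty Sb with hE | hNE
  · have hAE : Sa = ∅ := by
      ext M
      simp only [Set.mem_empty_iff_false, iff_false]
      intro hM
      obtain ⟨N, _, hN⟩ := dir2 M hM
      exact Set.eq_empty_iff_forall_notMem.mp hE N hN
    rw [hAE, hE, csSup_empty]
    simp
  · by_cases hbdd : BddAbove Sb
    · have hmem : sSup Sb ∈ Sb := Nat.sSup_mem hNE hbdd
      have h1 : d * sSup Sb ∈ Sa := dir1 _ hmem
      have hboundA : ∀ M ∈ Sa, M ≤ d * sSup Sb := by
        intro M hM
        obtain ⟨N, hle, hN⟩ := dir2 M hM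
        exact hle.trans (Nat.mul_le_mul_left d (le_csSup hbdd hN))
      apply le_antisymm
      · exact csSup_le ⟨_, h1⟩ hboundA
      · exact le_csSup ⟨d * sSup Sb, hboundA⟩ h1
    · have hbddA : ¬ BddAbove Sa := by
        rintro ⟨c, hc⟩
        apply hbdd
        refine ⟨c, fun N hN => ?_⟩
        exact le_trans (Nat.le_mul_of_pos_left N hd0) (hc (dir1 N hN))
      rw [csSup_of_not_bddAbove hbddA, csSup_of_not_bddAbove hbdd, csSup_empty]
      simp
end

section
/- Let a_1, a_2 be coprime positive integers, let m be a positive integer, and let j be a nonnegative integer with j < m+1. If g_j(a_1, a_2, m·a_1·a_2) ≠ 0, then g_j(a_1, a_2, m·a_1·a_2) = (j+1)·a_1·a_2 − a_1 − a_2. -/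
/-- The number of representations of `M` by the tuple `a` (nonnegative coefficients). -/
noncomputable def repCount {k : ℕ} (a : Fin k → ℕ) (M : ℕ) : ℕ :=
  Nat.card {x : Fin k → ℕ // ∑ i, a i * x i = M}

/-- The `j`-Frobenius number: the greatest integer with exactly `j` representations
by `a` if such an integer exists, and `0` otherwise. -/
noncomputable def gFrob {k : ℕ} (a : Fin k → ℕ) (j : ℕ) : ℕ :=
  sSup {M : ℕ | repCount a M = j}

noncomputable def rep2 (a b M : ℕ) : ℕ := Nat.card {p : ℕ × ℕ // a * p.1 + b * p.2 = M}

section lemmas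

variable {a b : ℕ}


lemma unique_small (cop : Nat.Coprime a b) (hb : 0 < b) {x y x' y' : ℕ}
    (hx : x < b) (hx' : x' < b) (h : a * x + b * y = a * x' + b * y') :
    x = x' ∧ y = y' := by
  have hmod : a * x ≡ a * x' [MOD b] := by
    show a * x % b = a * x' % b
    rw [← Nat.add_mul_mod_self_left (a * x) b y, ← Nat.add_mul_mod_self_left (a * x') b y', h]
  have hxx : x ≡ x' [MOD b] := hmod.cancel_left_of_coprime (by rwa [Nat.coprime_comm] at cop)
  have hxe : x = x' := by
    have := Nat.ModEq.eq_of_lt_of_lt hxx hx hx'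
    exact this
  subst hxe
  refine ⟨rfl, ?_⟩
  have : b * y = b * y' := by omega
  exact Nat.eq_of_mul_eq_mul_left hb this

lemma exists_rep_lt (hb : 0 < b) {M : ℕ} (h : ∃ x y, a * x + b * y = M) :
    ∃ x y, x < b ∧ a * x + b * y = M := by
  obtain ⟨x, y, hxy⟩ := h
  refine ⟨x % b, y + a * (x / b), Nat.mod_lt _ hb, ?_⟩
  have hd : x % b + b * (x / b) = x := Nat.mod_add_div x b
  calc a * (x % b) + b * (y + a * (x / b))
      = a * (x % b + b * (x / b)) + b * y := by ring
    _ = M := by rw [hd]; exact hxy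

lemma finite2 (ha : 0 < a) (hb : 0 < b) (M : ℕ) :
    Finite {p : ℕ × ℕ // a * p.1 + b * p.2 = M} := by
  apply Finite.of_injective (f := fun s : {p : ℕ × ℕ // a * p.1 + b * p.2 = M} =>
    ((⟨s.1.1, by
      have := s.2
      have h1 : s.1.1 ≤ a * s.1.1 := Nat.le_mul_of_pos_left _ ha
      omega⟩ : Fin (M+1)),
     (⟨s.1.2, by
      have := s.2
      have h1 : s.1.2 ≤ b * s.1.2 := Nat.le_mul_of_pos_left _ hb
      omega⟩ : Fin (M+1))))
  rintro ⟨⟨x, y⟩, h⟩ ⟨⟨x', y'⟩, h'⟩ hh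
  simp only [Prod.mk.injEq, Fin.mk.injEq] at hh
  simp [hh.1, hh.2]

lemma rep2_le_one (cop : Nat.Coprime a b) (ha : 0 < a) (hb : 0 < b) {M : ℕ}
    (h : M < a * b) : rep2 a b M ≤ 1 := by
  have hsub : Subsingleton {p : ℕ × ℕ // a * p.1 + b * p.2 = M} := by
    constructor
    rintro ⟨⟨x, y⟩, hxy⟩ ⟨⟨x', y'⟩, hxy'⟩
    dsimp only at hxy hxy'
    have hx : x < b := by
      by_contra hc
      have : a * b ≤ a * x := Nat.mul_le_mul_left a (by omega)
      omega
    have hx' : x' < b := by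
      by_contra hc
      have : a * b ≤ a * x' := Nat.mul_le_mul_left a (by omega)
      omega
    obtain ⟨e1, e2⟩ := unique_small cop hb (x := x) (y := y) (x' := x') (y' := y') hx hx' (by omega)
    simp [e1, e2]
  rcases isEmpty_or_nonempty {p : ℕ × ℕ // a * p.1 + b * p.2 = M} with he | hn
  · simp [rep2, Nat.card_of_isEmpty]
  · exact le_of_eq (Nat.card_unique)

lemma exists_rep {a b : ℕ} (cop : Nat.Coprime a b) (ha : 0 < a) (hb : 0 < b) {M : ℕ}
    (h : (a - 1) * (b - 1) ≤ M) : ∃ x y, a * x + b * y = M := by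
  rcases Nat.lt_or_ge a 2 with h1 | h1
  · have hA : a = 1 := by omega
    exact ⟨M, 0, by subst hA; omega⟩
  rcases Nat.lt_or_ge b 2 with h2 | h2
  · have hB : b = 1 := by omega
    exact ⟨0, M, by subst hB; simp⟩
  have hfrob := frobeniusNumber_pair cop h1 h2
  have hmn : a + b ≤ a * b := Nat.add_le_mul h1 h2
  have hM : a * b - a - b < M := by
    have key : (a-1)*(b-1) = a*b - a - b + 1 := by
      obtain ⟨a', rfl⟩ : ∃ a', a = a' + 2 := ⟨a - 2, by omega⟩
      obtain ⟨b', rfl⟩ : ∃ b', b = b' + 2 := ⟨b - 2, by omega⟩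
      have e1 : (a' + 2) * (b' + 2) = a' * b' + 2 * a' + 2 * b' + 4 := by ring
      have e2 : (a' + 2 - 1) * (b' + 2 - 1) = a' * b' + a' + b' + 1 := by
        rw [show a' + 2 - 1 = a' + 1 from rfl, show b' + 2 - 1 = b' + 1 from rfl]
        ring
      omega
    omega
  have : M ∈ AddSubmonoid.closure ({a, b} : Set ℕ) := by
    by_contra hc
    exact absurd (hfrob.2 hc) (by omega)
  rw [AddSubmonoid.mem_closure_pair] at this
  obtain ⟨x, y, hxy⟩ := this
  exact ⟨x, y, by simpa [smul_eq_mul, mul_comm] using hxy⟩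

lemma not_exists_rep {a b : ℕ} (cop : Nat.Coprime a b) (ha : 1 < a) (hb : 1 < b) :
    ¬ ∃ x y, a * x + b * y = a * b - a - b := by
  have hfrob := frobeniusNumber_pair cop ha hb
  rintro ⟨x, y, hxy⟩
  exact hfrob.1 (by
    rw [AddSubmonoid.mem_closure_pair]
    exact ⟨x, y, by simpa [smul_eq_mul, mul_comm] using hxy⟩)


lemma rep2_pos (cop : Nat.Coprime a b) (ha : 0 < a) (hb : 0 < b) {M : ℕ}
    (h : (a - 1) * (b - 1) ≤ M) : 1 ≤ rep2 a b M := by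
  have := finite2 ha hb M
  obtain ⟨x, y, hxy⟩ := exists_rep cop ha hb h
  have : Nonempty {p : ℕ × ℕ // a * p.1 + b * p.2 = M} := ⟨⟨(x, y), hxy⟩⟩
  exact Nat.card_pos

lemma rep2_frob (cop : Nat.Coprime a b) (ha : 1 < a) (hb : 1 < b) :
    rep2 a b (a * b - a - b) = 0 := by
  have : IsEmpty {p : ℕ × ℕ // a * p.1 + b * p.2 = a * b - a - b} := by
    constructor
    rintro ⟨⟨x, y⟩, hxy⟩
    exact not_exists_rep cop ha hb ⟨x, y, hxy⟩
  exact Nat.card_of_isEmpty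

lemma rep2_add (cop : Nat.Coprime a b) (ha : 0 < a) (hb : 0 < b) (M : ℕ) :
    rep2 a b (M + a * b) = rep2 a b M + 1 := by
  haveI := finite2 ha hb M
  haveI := finite2 ha hb (M + a * b)
  set T := {p : ℕ × ℕ // a * p.1 + b * p.2 = M + a * b}
  -- split T by whether b ≤ p.1
  have e0 : T ≃ {t : T // b ≤ t.1.1} ⊕ {t : T // ¬ b ≤ t.1.1} :=
    (Equiv.sumCompl _).symm
  have e1 : {t : T // b ≤ t.1.1} ≃ {p : ℕ × ℕ // a * p.1 + b * p.2 = M} := by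
    refine ⟨fun t => ⟨(t.1.1.1 - b, t.1.1.2), ?_⟩,
            fun p => ⟨⟨(p.1.1 + b, p.1.2), ?_⟩, ?_⟩, ?_, ?_⟩
    · obtain ⟨⟨⟨x, y⟩, hxy⟩, hbx⟩ := t
      dsimp only at hxy hbx ⊢
      have h1 : a * (x - b) + a * b = a * x := by
        rw [← Nat.mul_add, Nat.sub_add_cancel hbx]
      omega
    · obtain ⟨⟨x, y⟩, hxy⟩ := p
      dsimp only at hxy ⊢
      have h1 : a * (x + b) = a * x + a * b := by ring
      omega
    · obtain ⟨⟨x, y⟩, hxy⟩ := p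
      dsimp only
      omega
    · rintro ⟨⟨⟨x, y⟩, hxy⟩, hbx⟩
      apply Subtype.ext
      apply Subtype.ext
      simp only [Subtype.mk.injEq, Prod.mk.injEq] at hbx ⊢
      exact ⟨by omega, trivial⟩
    · rintro ⟨⟨x, y⟩, hxy⟩
      apply Subtype.ext
      simp only [Subtype.mk.injEq, Prod.mk.injEq]
      exact ⟨by omega, trivial⟩
  have e2 : Nat.card {t : T // ¬ b ≤ t.1.1} = 1 := by
    have hex : ∃ x y, x < b ∧ a * x + b * y = M + a * b := by
      apply exists_rep_lt hb
      apply exists_rep cop ha hb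
      have h1 : (a - 1) * (b - 1) ≤ a * b := Nat.mul_le_mul (by omega) (by omega)
      omega
    obtain ⟨x, y, hxb, hxy⟩ := hex
    haveI : Nonempty {t : T // ¬ b ≤ t.1.1} := ⟨⟨⟨(x, y), hxy⟩, by simpa using hxb⟩⟩
    haveI hsub : Subsingleton {t : T // ¬ b ≤ t.1.1} := by
      constructor
      rintro ⟨⟨⟨x1, y1⟩, h1⟩, hb1⟩ ⟨⟨⟨x2, y2⟩, h2⟩, hb2⟩
      dsimp only at h1 h2 hb1 hb2
      obtain ⟨e1, e2⟩ := unique_small cop hb (x := x1) (y := y1) (x' := x2) (y' := y2)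
        (by omega) (by omega) (by omega)
      simp [e1, e2]
    exact Nat.card_unique
  have : Nat.card T = Nat.card {p : ℕ × ℕ // a * p.1 + b * p.2 = M} + 1 := by
    rw [Nat.card_congr e0, Nat.card_sum, Nat.card_congr e1, e2]
  unfold rep2
  exact this

lemma rep2_mul_add (cop : Nat.Coprime a b) (ha : 0 < a) (hb : 0 < b) (q s : ℕ) :
    rep2 a b (q * (a * b) + s) = q + rep2 a b s := by
  induction q with
  | zero => simp
  | succ n ih =>
    have : (n + 1) * (a * b) + s = (n * (a * b) + s) + a * b := by ring
    rw [this, rep2_add cop ha hb, ih]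
    omega

lemma rep3_eq (ha : 0 < a) (hb : 0 < b) {c : ℕ} (hc : 0 < c) (M : ℕ) :
    repCount ![a, b, c] M = ∑ z ∈ Finset.range (M / c + 1), rep2 a b (M - c * z) := by
  have hiff : ∀ x : Fin 3 → ℕ,
      (∑ i, ![a, b, c] i * x i = M) ↔ a * x 0 + b * x 1 + c * x 2 = M := by
    intro x
    rw [Fin.sum_univ_three]
    simp [Matrix.cons_val_zero, Matrix.cons_val_one, Matrix.head_cons]
  have E : {x : Fin 3 → ℕ // ∑ i, ![a, b, c] i * x i = M} ≃
      (Σ z : Fin (M / c + 1), {p : ℕ × ℕ // a * p.1 + b * p.2 = M - c * z.1}) := by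
    refine ⟨fun x => ⟨⟨x.1 2, ?_⟩, ⟨(x.1 0, x.1 1), ?_⟩⟩,
            fun s => ⟨![s.2.1.1, s.2.1.2, s.1.1], ?_⟩, ?_, ?_⟩
    · have hx := (hiff x.1).mp x.2
      have h1 : x.1 2 ≤ M / c := (Nat.le_div_iff_mul_le hc).mpr (by
        have hcm : c * x.1 2 = x.1 2 * c := Nat.mul_comm _ _
        omega)
      omega
    · have hx := (hiff x.1).mp x.2
      show a * x.1 0 + b * x.1 1 = M - c * x.1 2
      omega
    · rw [hiff]
      obtain ⟨⟨z, hz⟩, ⟨⟨p1, p2⟩, hp⟩⟩ := s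
      dsimp only at hp ⊢
      have h1 : c * z ≤ M := by
        have h2 : z ≤ M / c := by omega
        have h3 : z * c ≤ M := (Nat.le_div_iff_mul_le hc).mp h2
        have hcm : c * z = z * c := Nat.mul_comm _ _
        omega
      show a * p1 + b * p2 + c * z = M
      omega
    · rintro ⟨x, hx⟩
      apply Subtype.ext
      funext i
      fin_cases i <;> rfl
    · rintro ⟨⟨z, hz⟩, ⟨⟨p1, p2⟩, hp⟩⟩
      rfl
  rw [repCount, Nat.card_congr E]
  haveI : ∀ z : Fin (M / c + 1), Fintype {p : ℕ × ℕ // a * p.1 + b * p.2 = M - c * z.1} :=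
    fun z => @Fintype.ofFinite _ (finite2 ha hb _)
  rw [Nat.card_eq_fintype_card, Fintype.card_sigma]
  rw [← Fin.sum_univ_eq_sum_range (fun z => rep2 a b (M - c * z)) (M / c + 1)]
  apply Finset.sum_congr rfl
  intro z _
  rw [rep2, Nat.card_eq_fintype_card]

end lemmas

/-- First part of the Corollary: for `j < m + 1`, if `g_j(a₁, a₂, m·a₁·a₂) ≠ 0` then
`g_j(a₁, a₂, m·a₁·a₂) = (j+1)·a₁·a₂ − a₁ − a₂`. -/
theorem gFrob_of_triple (a1 a2 : ℕ) (ha1 : 0 < a1) (ha2 : 0 < a2)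
    (hcop : Nat.Coprime a1 a2) (m : ℕ) (hm : 0 < m) (j : ℕ) (hj : j < m + 1)
    (hne : gFrob ![a1, a2, m * a1 * a2] j ≠ 0) :
    (gFrob ![a1, a2, m * a1 * a2] j : ℤ) = (j + 1) * a1 * a2 - a1 - a2 := by
  set c := m * a1 * a2 with hc
  set P := a1 * a2 with hP
  have hP0 : 0 < P := Nat.mul_pos ha1 ha2
  have hcP : c = m * P := by rw [hc, hP, mul_assoc]
  have hc0 : 0 < c := by rw [hcP]; exact Nat.mul_pos hm hP0
  have hjm : j ≤ m := by omega
  -- the key disjunction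
  have hcase : (1 < a1 ∧ 1 < a2) ∨ ((a1 = 1 ∨ a2 = 1) ∧ 1 ≤ j) := by
    by_contra hcon
    push_neg at hcon
    obtain ⟨h1, h2⟩ := hcon
    have hone : a1 = 1 ∨ a2 = 1 := by omega
    have hj0 : j = 0 := by omega
    have hzero : (a1 - 1) * (a2 - 1) = 0 := by
      rcases hone with h | h <;> simp [h]
    have hempty : {M : ℕ | repCount ![a1, a2, c] M = j} = ∅ := by
      ext M
      simp only [Set.mem_setOf_eq, Set.mem_empty_iff_false, iff_false]
      intro hMrep
      have h3 : 1 ≤ repCount ![a1, a2, c] M := by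
        rw [rep3_eq ha1 ha2 hc0]
        have h4 : 1 ≤ rep2 a1 a2 (M - c * 0) := by
          apply rep2_pos hcop ha1 ha2
          simp [hzero]
        calc 1 ≤ rep2 a1 a2 (M - c * 0) := h4
          _ ≤ ∑ z ∈ Finset.range (M / c + 1), rep2 a1 a2 (M - c * z) :=
            Finset.single_le_sum (f := fun z => rep2 a1 a2 (M - c * z))
              (fun i _ => Nat.zero_le _) (Finset.mem_range.mpr (Nat.succ_pos _))
      omega
    apply hne
    rw [gFrob, hempty, csSup_empty]
    rfl
  -- bound for the cast and for G
  have hab : a1 + a2 ≤ (j + 1) * P := by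
    rcases hcase with ⟨h1, h2⟩ | ⟨h1, h2⟩
    · have : a1 + a2 ≤ P := by rw [hP]; exact Nat.add_le_mul h1 h2
      have h3 : P ≤ (j + 1) * P := Nat.le_mul_of_pos_left P (by omega)
      omega
    · have h3 : 2 * P ≤ (j + 1) * P := Nat.mul_le_mul_right P (by omega)
      have h4 : a1 ≤ P := by rw [hP]; exact Nat.le_mul_of_pos_right a1 ha2
      have h5 : a2 ≤ P := by rw [hP]; exact Nat.le_mul_of_pos_left a2 ha1
      omega
  set G := (j + 1) * P - a1 - a2 with hG
  have hjP : (j + 1) * P = j * P + P := by ring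
  -- rep2 value at G
  have hGrep2 : rep2 a1 a2 G = j := by
    rcases hcase with ⟨h1, h2⟩ | ⟨h1, h2⟩
    · have haP : a1 + a2 ≤ P := by rw [hP]; exact Nat.add_le_mul h1 h2
      have hGd : G = j * P + (P - a1 - a2) := by omega
      rw [hGd, hP, rep2_mul_add hcop ha1 ha2, rep2_frob hcop h1 h2]
      omega
    · have haP : P + 1 = a1 + a2 := by
        rcases h1 with h | h <;> (rw [hP]; subst h; omega)
      have hj1 : j - 1 + 1 = j := by omega
      have hj2 : j * P = (j - 1) * P + P := by
        calc j * P = (j - 1 + 1) * P := by rw [hj1]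
          _ = (j - 1) * P + P := by ring
      have hGd : G = (j - 1) * P + (P - 1) := by omega
      have hval : rep2 a1 a2 (P - 1) = 1 := by
        apply le_antisymm
        · exact rep2_le_one hcop ha1 ha2 (by rw [← hP]; omega)
        · apply rep2_pos hcop ha1 ha2
          have hzero : (a1 - 1) * (a2 - 1) = 0 := by
            rcases h1 with h | h <;> simp [h]
          omega
      rw [hGd, hP, rep2_mul_add hcop ha1 ha2, ← hP, hval]
      omega
  -- membership
  have hmem : repCount ![a1, a2, c] G = j := by
    rw [rep3_eq ha1 ha2 hc0]
    by_cases hGc : G < c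
    · rw [Nat.div_eq_of_lt hGc, Finset.sum_range_one]
      simpa using hGrep2
    · push_neg at hGc
      -- must be case A with j = m
      have hcaseA : 1 < a1 ∧ 1 < a2 := by
        by_contra hA
        have h1 : a1 = 1 ∨ a2 = 1 := by
          rcases hcase with ⟨x1, x2⟩ | ⟨x1, x2⟩
          · exact absurd ⟨x1, x2⟩ hA
          · exact x1
        have haP : P + 1 = a1 + a2 := by
          rcases h1 with h | h <;> (rw [hP]; subst h; omega)
        have hmP : j * P ≤ m * P := Nat.mul_le_mul_right P hjm
        rw [hcP] at hGc
        omega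
      obtain ⟨h1, h2⟩ := hcaseA
      have haP : a1 + a2 ≤ P := by rw [hP]; exact Nat.add_le_mul h1 h2
      have hjem : j = m := by
        by_contra hne2
        have hjm' : j + 1 ≤ m := by omega
        have : (j + 1) * P ≤ m * P := Nat.mul_le_mul_right P hjm'
        rw [hcP] at hGc
        omega
      subst hjem
      have hmP : (j + 1) * P = j * P + P := by ring
      have h2c : G < 2 * c := by
        rw [hcP]
        have e1 : 2 * (j * P) = j * P + j * P := by ring
        have e2 : P ≤ j * P := Nat.le_mul_of_pos_left P (by omega)
        omega
      have e1 : 1 * c = c := one_mul c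
      have e2 : (1 + 1) * c = 2 * c := by ring
      have hdiv : G / c = 1 := Nat.div_eq_of_lt_le (by omega) (by omega)
      rw [hdiv, Finset.sum_range_succ, Finset.sum_range_one]
      simp only [mul_zero, Nat.sub_zero, mul_one]
      rw [hGrep2]
      have hGc' : G - c = P - a1 - a2 := by rw [hcP] at hGc ⊢; omega
      rw [hGc', hP, rep2_frob hcop h1 h2]
      omega
  -- upper bound
  have hzz : (a1 - 1) * (a2 - 1) ≤ P := Nat.mul_le_mul (by omega) (by omega)
  have hub : ∀ M : ℕ, G < M → j + 1 ≤ repCount ![a1, a2, c] M := by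
    intro M hM
    have hGsucc : G + 1 = j * P + ((a1 - 1) * (a2 - 1)) ∨
        (G + 1 = j * P ∧ (a1 - 1) * (a2 - 1) = 0) := by
      rcases hcase with ⟨h1, h2⟩ | ⟨h1, h2⟩
      · left
        have haP : a1 + a2 ≤ P := by rw [hP]; exact Nat.add_le_mul h1 h2
        have key : (a1 - 1) * (a2 - 1) = P - a1 - a2 + 1 := by
          obtain ⟨x, rfl⟩ : ∃ x, a1 = x + 2 := ⟨a1 - 2, by omega⟩
          obtain ⟨y, rfl⟩ : ∃ y, a2 = y + 2 := ⟨a2 - 2, by omega⟩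
          have k1 : P = x * y + 2 * x + 2 * y + 4 := by rw [hP]; ring
          have k2 : (x + 2 - 1) * (y + 2 - 1) = x * y + x + y + 1 := by
            rw [show x + 2 - 1 = x + 1 from rfl, show y + 2 - 1 = y + 1 from rfl]; ring
          omega
        omega
      · right
        have haP : P + 1 = a1 + a2 := by
          rcases h1 with h | h <;> (rw [hP]; subst h; omega)
        have hzero : (a1 - 1) * (a2 - 1) = 0 := by
          rcases h1 with h | h <;> simp [h]
        have hj3 : 1 * P ≤ j * P := Nat.mul_le_mul_right P (by omega)
        have e3 : 1 * P = P := one_mul P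
        omega
    have hMlb : j * P + (a1 - 1) * (a2 - 1) ≤ M := by
      rcases hGsucc with h | ⟨h, h'⟩ <;> omega
    have hdecomp : ∀ N : ℕ, j * P ≤ N → rep2 a1 a2 N = j + rep2 a1 a2 (N - j * P) := by
      intro N hN
      conv_lhs => rw [show N = j * P + (N - j * P) by omega]
      rw [hP, rep2_mul_add hcop ha1 ha2]
    rw [rep3_eq ha1 ha2 hc0]
    by_cases hZ : M < c
    · rw [Nat.div_eq_of_lt hZ, Finset.sum_range_one]
      simp only [mul_zero, Nat.sub_zero]
      rw [hdecomp M (by omega)]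
      have : 1 ≤ rep2 a1 a2 (M - j * P) := rep2_pos hcop ha1 ha2 (by omega)
      omega
    · push_neg at hZ
      have hZ1 : 1 ≤ M / c := (Nat.one_le_div_iff hc0).mpr hZ
      have hsub : ({0, 1} : Finset ℕ) ⊆ Finset.range (M / c + 1) := by
        intro x hx
        simp only [Finset.mem_insert, Finset.mem_singleton] at hx
        rcases hx with rfl | rfl <;> exact Finset.mem_range.mpr (by omega)
      have hsum : rep2 a1 a2 (M - c * 0) + rep2 a1 a2 (M - c * 1) ≤
          ∑ z ∈ Finset.range (M / c + 1), rep2 a1 a2 (M - c * z) := by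
        have hmono := Finset.sum_le_sum_of_subset
          (f := fun z => rep2 a1 a2 (M - c * z)) hsub
        rwa [Finset.sum_pair (by norm_num : (0 : ℕ) ≠ 1)] at hmono
      simp only [mul_zero, Nat.sub_zero, mul_one] at hsum
      have hmP : j * P ≤ m * P := Nat.mul_le_mul_right P hjm
      have hrM : j ≤ rep2 a1 a2 M := by
        rw [hdecomp M (by rw [hcP] at hZ; omega)]
        omega
      by_cases hjem : j = m
      · -- rep2 (M - c) ≥ 1
        have hr1 : 1 ≤ rep2 a1 a2 (M - c) := by
          apply rep2_pos hcop ha1 ha2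
          rw [hcP]
          subst hjem
          omega
        omega
      · have hjm' : j + 1 ≤ m := by omega
        have hmP2 : (j + 1) * P ≤ m * P := Nat.mul_le_mul_right P hjm'
        have hrM' : j + 1 ≤ rep2 a1 a2 M := by
          rw [hdecomp M (by rw [hcP] at hZ; omega)]
          have : 1 ≤ rep2 a1 a2 (M - j * P) := by
            apply rep2_pos hcop ha1 ha2
            rw [hcP] at hZ
            omega
          omega
        omega
  -- conclude
  have hbdd : ∀ M ∈ {M : ℕ | repCount ![a1, a2, c] M = j}, M ≤ G := by
    intro M hM
    by_contra hcon
    have := hub M (by omega)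
    simp only [Set.mem_setOf_eq] at hM
    omega
  have hGval : gFrob ![a1, a2, c] j = G := by
    rw [gFrob]
    apply le_antisymm
    · exact csSup_le ⟨G, hmem⟩ hbdd
    · exact le_csSup ⟨G, hbdd⟩ hmem
  rw [hGval]
  have hA1 : a1 ≤ (j + 1) * P := by omega
  have hA2 : a2 ≤ (j + 1) * P - a1 := by omega
  rw [hG]
  zify [hA1, hA2]
  rw [hP]
  push_cast
  ring
end

section
/- Let a_1, a_2 be coprime positive integers and let m be a positive integer. Then g_{m+1}(a_1, a_2, m·a_1·a_2) = 0; that is, no nonnegative integer is the largest integer with exactly m+1 representations by (a_1, a_2, m·a_1·a_2) because no nonnegative integer has exactly m+1 such representations. -/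
open Finset

/-- The set of `x`-values of representations of `N` by the pair `(a1, a2)`. -/
def Fset (a1 a2 N : ℕ) : Finset ℕ :=
  (Finset.range (N+1)).filter fun x => a1*x ≤ N ∧ (a1*x) % a2 = N % a2

section lemmas

variable {a1 a2 : ℕ}

lemma mem_Fset (ha1 : 0 < a1) {N x : ℕ} :
    x ∈ Fset a1 a2 N ↔ a1*x ≤ N ∧ (a1*x) % a2 = N % a2 := by
  simp only [Fset, mem_filter, mem_range]
  constructor
  · tauto
  · intro h
    refine ⟨?_, h⟩
    have := Nat.le_mul_of_pos_left x ha1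
    omega

lemma pairCard (ha1 : 0 < a1) (ha2 : 0 < a2) (N : ℕ) :
    Nat.card {p : ℕ × ℕ // a1 * p.1 + a2 * p.2 = N} = (Fset a1 a2 N).card := by
  have e : {p : ℕ × ℕ // a1 * p.1 + a2 * p.2 = N} ≃ {x // x ∈ Fset a1 a2 N} := by
    refine ⟨fun p => ⟨p.1.1, ?_⟩, fun x => ⟨(x.1, (N - a1*x.1)/a2), ?_⟩, ?_, ?_⟩
    · obtain ⟨⟨x, y⟩, hp⟩ := p
      simp only at hp
      rw [mem_Fset ha1]
      show a1*x ≤ N ∧ (a1*x) % a2 = N % a2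
      refine ⟨by omega, ?_⟩
      rw [← hp, Nat.add_mul_mod_self_left]
    · obtain ⟨x, hx⟩ := x
      rw [mem_Fset ha1] at hx
      have hdvd : a2 ∣ N - a1*x := (Nat.modEq_iff_dvd' hx.1).mp hx.2
      simp only
      rw [Nat.mul_div_cancel' hdvd]
      omega
    · rintro ⟨⟨x, y⟩, hp⟩
      simp only at hp ⊢
      have : N - a1 * x = a2 * y := by omega
      ext <;> simp [this, Nat.mul_div_cancel_left _ ha2]
    · rintro ⟨x, hx⟩
      rfl
  rw [Nat.card_congr e, Nat.card_eq_fintype_card, Fintype.card_coe]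

lemma unique_small_s7 (hcop : Nat.Coprime a1 a2) {x x' : ℕ}
    (hx : x < a2) (hx' : x' < a2) (h : (a1*x) % a2 = (a1*x') % a2) : x = x' := by
  have ha2 : 0 < a2 := lt_of_le_of_lt (Nat.zero_le x) hx
  haveI : NeZero a2 := ⟨ha2.ne'⟩
  have h2 : ((a1 : ZMod a2) * x) = ((a1 : ZMod a2) * x') := by
    have := (ZMod.natCast_eq_natCast_iff (a1*x) (a1*x') a2).mpr h
    push_cast at this
    exact this
  have hu : IsUnit (a1 : ZMod a2) := (ZMod.unitOfCoprime a1 hcop).isUnit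
  have h3 : ((x : ZMod a2)) = x' := hu.mul_left_cancel h2
  have := congrArg ZMod.val h3
  rwa [ZMod.val_cast_of_lt hx, ZMod.val_cast_of_lt hx'] at this

lemma exists_small (ha2 : 0 < a2) (hcop : Nat.Coprime a1 a2) (N : ℕ) :
    ∃ x < a2, (a1*x) % a2 = N % a2 := by
  haveI : NeZero a2 := ⟨ha2.ne'⟩
  set u := ZMod.unitOfCoprime a1 hcop
  refine ⟨((u⁻¹ : (ZMod a2)ˣ) * (N : ZMod a2)).val, ZMod.val_lt _, ?_⟩
  have : ((a1 * ((u⁻¹ : (ZMod a2)ˣ) * (N : ZMod a2)).val : ℕ) : ZMod a2) = (N : ZMod a2) := by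
    push_cast
    rw [ZMod.natCast_val, ZMod.cast_id]
    have hu : (u : ZMod a2) = (a1 : ZMod a2) := ZMod.coe_unitOfCoprime a1 hcop
    calc (a1 : ZMod a2) * ((u⁻¹ : (ZMod a2)ˣ) * N) = ((u : ZMod a2) * (u⁻¹ : (ZMod a2)ˣ)) * N := by
          rw [hu]; ring
      _ = N := by rw [← Units.val_mul, mul_inv_cancel, Units.val_one, one_mul]
  exact (ZMod.natCast_eq_natCast_iff _ _ _).mp this

lemma Fset_small (ha1 : 0 < a1) (hcop : Nat.Coprime a1 a2) {N : ℕ} (hN : N < a1*a2) :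
    (Fset a1 a2 N).card ≤ 1 := by
  apply Finset.card_le_one.mpr
  intro x hx y hy
  rw [mem_Fset ha1] at hx hy
  have hxa : x < a2 := Nat.lt_of_mul_lt_mul_left (lt_of_le_of_lt hx.1 hN)
  have hya : y < a2 := Nat.lt_of_mul_lt_mul_left (lt_of_le_of_lt hy.1 hN)
  exact unique_small_s7 hcop hxa hya (hx.2.trans hy.2.symm)

lemma Fset_shift (ha1 : 0 < a1) (ha2 : 0 < a2) (hcop : Nat.Coprime a1 a2) (N : ℕ) :
    (Fset a1 a2 (N + a1*a2)).card = (Fset a1 a2 N).card + 1 := by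
  obtain ⟨x0, hx0lt, hx0⟩ := exists_small ha2 hcop N
  have hmodp : (N + a1*a2) % a2 = N % a2 := by
    rw [mul_comm a1 a2, Nat.add_mul_mod_self_left]
  have hset : Fset a1 a2 (N + a1*a2) = insert x0 ((Fset a1 a2 N).image (· + a2)) := by
    ext x
    rw [mem_Fset ha1, Finset.mem_insert, Finset.mem_image]
    constructor
    · rintro ⟨hle, hmod⟩
      rcases lt_or_ge x a2 with hxa | hxa
      · left
        exact unique_small_s7 hcop hxa hx0lt (by rw [hmod, hmodp, hx0])
      · right
        refine ⟨x - a2, ?_, by omega⟩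
        rw [mem_Fset ha1]
        have hkey : a1*(x - a2) + a1*a2 = a1*x := by
          rw [← Nat.mul_add]
          congr 1
          omega
        constructor
        · omega
        · have : (a1*(x-a2)) % a2 = (a1*(x-a2) + a1*a2) % a2 := by
            rw [mul_comm a1 a2, Nat.add_mul_mod_self_left]
          rw [this, hkey, hmod, hmodp]
    · rintro (rfl | ⟨y, hy, rfl⟩)
      · constructor
        · have := (Nat.mul_lt_mul_left ha1).mpr hx0lt
          omega
        · rw [hmodp]; exact hx0
      · rw [mem_Fset ha1] at hy
        constructor
        · rw [Nat.mul_add]; omega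
        · rw [Nat.mul_add]
          have h5 : (a1*y + a1*a2) % a2 = (a1*y) % a2 := by
            rw [mul_comm a1 a2, Nat.add_mul_mod_self_left]
          rw [h5, hmodp, hy.2]
  rw [hset]
  rw [Finset.card_insert_of_notMem, Finset.card_image_of_injective _ (add_left_injective a2)]
  intro hmem
  rw [Finset.mem_image] at hmem
  obtain ⟨y, _, hy⟩ := hmem
  omega

lemma Fset_formula (ha1 : 0 < a1) (ha2 : 0 < a2) (hcop : Nat.Coprime a1 a2) (N : ℕ) :
    (Fset a1 a2 N).card = N/(a1*a2) + (Fset a1 a2 (N % (a1*a2))).card := by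
  induction N using Nat.strong_induction_on with
  | _ N ih =>
    set p := a1*a2 with hp
    have hppos : 0 < p := Nat.mul_pos ha1 ha2
    rcases lt_or_ge N p with hN | hN
    · rw [Nat.div_eq_of_lt hN, Nat.mod_eq_of_lt hN, zero_add]
    · have h1 : N = (N - p) + p := by omega
      have h2 : (N - p) < N := by omega
      have h3 : (N - p) % p = N % p := by
        conv_rhs => rw [h1]
        rw [Nat.add_mod_right]
      have h4 : (N - p) / p + 1 = N / p := by
        conv_rhs => rw [h1]
        rw [Nat.add_div_right _ hppos]
      calc (Fset a1 a2 N).card = (Fset a1 a2 ((N - p) + p)).card := by rw [← h1]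
        _ = (Fset a1 a2 (N - p)).card + 1 := Fset_shift ha1 ha2 hcop _
        _ = (N-p)/p + (Fset a1 a2 ((N-p) % p)).card + 1 := by rw [ih _ h2]
        _ = N/p + (Fset a1 a2 (N % p)).card := by rw [h3]; omega

lemma pairFinite (ha1 : 0 < a1) (ha2 : 0 < a2) (N : ℕ) :
    Finite {p : ℕ × ℕ // a1 * p.1 + a2 * p.2 = N} := by
  apply Finite.of_injective (fun p => ((⟨p.1.1, by
      obtain ⟨⟨x,y⟩,hp⟩ := p
      have hp' : a1*x + a2*y = N := hp
      show x < N + 1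
      have := Nat.le_mul_of_pos_left x ha1
      omega⟩ : Fin (N+1)), (⟨p.1.2, by
      obtain ⟨⟨x,y⟩,hp⟩ := p
      have hp' : a1*x + a2*y = N := hp
      show y < N + 1
      have := Nat.le_mul_of_pos_left y ha2
      omega⟩ : Fin (N+1))))
  rintro ⟨⟨x,y⟩,hp⟩ ⟨⟨x',y'⟩,hp'⟩ h
  simp only [Prod.mk.injEq, Fin.mk.injEq] at h
  simp [h.1, h.2]

/-- Decomposition of the triple representation set according to the third coordinate. -/
def tripleEquiv (a1 a2 c M : ℕ) (hc : 0 < c) :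
    {x : Fin 3 → ℕ // a1 * x 0 + a2 * x 1 + c * x 2 = M} ≃
      Σ t : Fin (M/c + 1), {p : ℕ × ℕ // a1 * p.1 + a2 * p.2 = M - c*(t:ℕ)} := by
  refine ⟨fun x => ⟨⟨x.1 2, ?_⟩, ⟨(x.1 0, x.1 1), ?_⟩⟩,
    fun s => ⟨![s.2.1.1, s.2.1.2, s.1], ?_⟩, ?_, ?_⟩
  · have hx := x.2
    have h1 : x.1 2 ≤ M / c := by
      apply (Nat.le_div_iff_mul_le hc).mpr
      rw [mul_comm]
      omega
    omega
  · have hx := x.2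
    show a1 * x.1 0 + a2 * x.1 1 = M - c * (x.1 2)
    omega
  · obtain ⟨⟨t, ht⟩, ⟨⟨u, v⟩, hp⟩⟩ := s
    have hp' : a1*u + a2*v = M - c*t := hp
    show a1*u + a2*v + c*t = M
    have htle : t ≤ M / c := by omega
    have hct : c * t ≤ M := by
      calc c * t ≤ c * (M / c) := Nat.mul_le_mul_left c htle
        _ ≤ M := Nat.mul_div_le M c
    omega
  · rintro ⟨x, hx⟩
    apply Subtype.ext
    funext i
    fin_cases i <;> rfl
  · rintro ⟨⟨t, ht⟩, ⟨⟨u, v⟩, hp⟩⟩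
    rfl

lemma tripleCard (ha1 : 0 < a1) (ha2 : 0 < a2) {c : ℕ} (hc : 0 < c) (M : ℕ) :
    Nat.card {x : Fin 3 → ℕ // a1 * x 0 + a2 * x 1 + c * x 2 = M}
      = ∑ t ∈ Finset.range (M/c + 1), (Fset a1 a2 (M - c*t)).card := by
  rw [Nat.card_congr (tripleEquiv a1 a2 c M hc)]
  haveI : ∀ t : Fin (M/c+1), Finite {p : ℕ × ℕ // a1 * p.1 + a2 * p.2 = M - c*(t:ℕ)} :=
    fun _ => pairFinite ha1 ha2 _
  haveI : ∀ t : Fin (M/c+1), Fintype {p : ℕ × ℕ // a1 * p.1 + a2 * p.2 = M - c*(t:ℕ)} :=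
    fun _ => Fintype.ofFinite _
  rw [Nat.card_eq_fintype_card, Fintype.card_sigma,
    ← Fin.sum_univ_eq_sum_range (fun t => (Fset a1 a2 (M - c*t)).card)]
  refine Finset.sum_congr rfl fun t _ => ?_
  rw [← Nat.card_eq_fintype_card, pairCard ha1 ha2]

end lemmas

/-- Second part of the Corollary: `g_{m+1}(a₁, a₂, m·a₁·a₂) = 0`, because no
nonnegative integer has exactly `m + 1` representations by `(a₁, a₂, m·a₁·a₂)`. -/
theorem gFrob_succ_of_triple (a1 a2 : ℕ) (ha1 : 0 < a1) (ha2 : 0 < a2)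
    (hcop : Nat.Coprime a1 a2) (m : ℕ) (hm : 0 < m) :
    gFrob ![a1, a2, m * a1 * a2] (m + 1) = 0 ∧
      ∀ n : ℕ, repCount ![a1, a2, m * a1 * a2] n ≠ m + 1 := by
  set c := m * a1 * a2 with hc_def
  have hppos : 0 < a1 * a2 := Nat.mul_pos ha1 ha2
  have hc : 0 < c := by positivity
  have key : ∀ n : ℕ, repCount ![a1, a2, c] n ≠ m + 1 := by
    intro n hrep
    have hun : repCount ![a1, a2, c] n
        = Nat.card {x : Fin 3 → ℕ // a1 * x 0 + a2 * x 1 + c * x 2 = n} := by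
      unfold repCount
      apply Nat.card_congr (Equiv.subtypeEquivRight _)
      intro x
      simp [Fin.sum_univ_three]
    rw [hun, tripleCard ha1 ha2 hc] at hrep
    clear hun
    set p := a1 * a2 with hp_def
    set q := n / p with hq_def
    set s := n % p with hs_def
    set u := n / c with hu_def
    set v := q % m with hv_def
    set ε := (Fset a1 a2 s).card with he_def
    have hε : ε ≤ 1 := Fset_small ha1 hcop (Nat.mod_lt _ hppos)
    have hu2 : u = q / m := by
      have hcp : c = p * m := by rw [hc_def, hp_def]; ring
      rw [hu_def, hq_def, Nat.div_div_eq_div_mul, hcp]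
    have hq2 : m * u + v = q := by
      rw [hu2, hv_def]
      exact Nat.div_add_mod q m
    have hterm : ∀ t ∈ Finset.range (u+1),
        (Fset a1 a2 (n - c*t)).card = (q - m*t) + ε := by
      intro t ht
      rw [Finset.mem_range] at ht
      have htu : t ≤ u := by omega
      have hmt : m * t ≤ q := by
        calc m * t ≤ m * u := Nat.mul_le_mul_left m htu
          _ ≤ q := by omega
      have hrepr : n - c*t = s + (q - m*t)*p := by
        have h1 : p * q + s = n := Nat.div_add_mod n p
        have h2 : (q - m*t)*p + (m*t)*p = p*q := by
          rw [← Nat.add_mul, Nat.sub_add_cancel hmt, mul_comm]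
        have h3 : c * t = (m*t)*p := by
          rw [hc_def, hp_def]
          ring
        omega
      rw [hrepr, Fset_formula ha1 ha2 hcop, Nat.add_mul_div_right _ _ hppos,
        Nat.add_mul_mod_self_right]
      have hsp : s < p := Nat.mod_lt _ hppos
      rw [Nat.div_eq_of_lt hsp, Nat.mod_eq_of_lt hsp]
      omega
    rw [Finset.sum_congr rfl hterm] at hrep
    have hsum : ∑ t ∈ Finset.range (u+1), ((q - m*t) + ε)
        = ∑ j ∈ Finset.range (u+1), ((m*j + v) + ε) := by
      rw [← Finset.sum_range_reflect (fun t => (q - m*t) + ε) (u+1)]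
      refine Finset.sum_congr rfl fun j hj => ?_
      rw [Finset.mem_range] at hj
      have hju : j ≤ u := by omega
      have h4 : m*(u - j) + m*j = m*u := by
        rw [← Nat.mul_add]
        congr 1
        omega
      have h5 : u + 1 - 1 - j = u - j := by omega
      rw [h5]
      omega
    rw [hsum] at hrep
    have hsplit : ∑ j ∈ Finset.range (u+1), ((m*j + v) + ε)
        = m * (∑ j ∈ Finset.range (u+1), j) + (u+1)*(v+ε) := by
      rw [Finset.sum_add_distrib, Finset.sum_add_distrib, ← Finset.mul_sum,
        Finset.sum_const, Finset.sum_const, Finset.card_range]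
      ring
    rw [hsplit] at hrep
    set S := ∑ j ∈ Finset.range (u+1), j with hS_def
    have hgauss : S * 2 = (u+1) * u := Finset.sum_range_id_mul_two (u+1)
    have hvlt : v < m := Nat.mod_lt _ hm
    clear hterm hsum hsplit hu2 hq2 hu_def hv_def hS_def
    rcases u with _ | _ | w
    · have hS0 : S = 0 := by omega
      rw [hS0, Nat.mul_zero] at hrep
      omega
    · have hS1 : S = 1 := by omega
      rw [hS1, Nat.mul_one] at hrep
      omega
    · have h6 : 6 ≤ (w+1+1+1)*(w+1+1) := by nlinarith
      have hS3 : 3 ≤ S := by omega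
      have h7 : m*3 ≤ m*S := Nat.mul_le_mul_left m hS3
      omega
  constructor
  · have hempty : {M : ℕ | repCount ![a1, a2, c] M = m + 1} = ∅ := by
      ext M
      simp [key M]
    rw [gFrob, hempty]
    exact csSup_empty
  · exact key
end

section
/- Let a_1, a_2 be coprime positive integers and let m be a positive integer. Then g_{m+2}(a_1, a_2, m·a_1·a_2) = (m+2)·a_1·a_2 − a_1 − a_2. -/
/-! ### Auxiliary machinery -/

/-- Number of representations by a pair. -/
noncomputable def R2 (a1 a2 M : ℕ) : ℕ := Nat.card {p : ℕ × ℕ // a1 * p.1 + a2 * p.2 = M}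

/-- Number of representations by a triple. -/
noncomputable def R3 (a1 a2 c M : ℕ) : ℕ :=
  Nat.card {t : ℕ × ℕ × ℕ // a1 * t.1 + a2 * t.2.1 + c * t.2.2 = M}

lemma finite_R2 {a1 a2 : ℕ} (ha1 : 0 < a1) (ha2 : 0 < a2) (M : ℕ) :
    Finite {p : ℕ × ℕ // a1 * p.1 + a2 * p.2 = M} := by
  have : {p : ℕ × ℕ | a1 * p.1 + a2 * p.2 = M} ⊆ Set.Iic (M, M) := by
    rintro ⟨x, y⟩ h
    simp only [Set.mem_setOf_eq] at h
    constructor <;> simp <;> nlinarith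
  exact ((Set.finite_Iic (M, M)).subset this).to_subtype

lemma finite_R3 {a1 a2 c : ℕ} (ha1 : 0 < a1) (ha2 : 0 < a2) (hc : 0 < c) (M : ℕ) :
    Finite {t : ℕ × ℕ × ℕ // a1 * t.1 + a2 * t.2.1 + c * t.2.2 = M} := by
  have : {t : ℕ × ℕ × ℕ | a1 * t.1 + a2 * t.2.1 + c * t.2.2 = M} ⊆ Set.Iic (M, M, M) := by
    rintro ⟨x, y, z⟩ h
    simp only [Set.mem_setOf_eq] at h
    refine ⟨by simp; nlinarith, ⟨by simp; nlinarith, by simp; nlinarith⟩⟩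
  exact ((Set.finite_Iic (M, M, M)).subset this).to_subtype

lemma R2_step {a1 a2 : ℕ} (ha1 : 0 < a1) (ha2 : 0 < a2) (hcop : Nat.Coprime a1 a2) (M : ℕ) :
    R2 a1 a2 (M + a1 * a2) = R2 a1 a2 M + 1 := by
  classical
  haveI : NeZero a2 := ⟨ha2.ne'⟩
  haveI F1 := finite_R2 ha1 ha2 (M + a1 * a2)
  haveI F2 := finite_R2 ha1 ha2 M
  set A := {p : ℕ × ℕ // a1 * p.1 + a2 * p.2 = M + a1 * a2} with hA
  -- the unique small x
  set x0 : ℕ := ((a1 : ZMod a2)⁻¹ * (M : ZMod a2)).val with hx0def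
  have hx0lt : x0 < a2 := ZMod.val_lt _
  have hx0cast : ((a1 * x0 : ℕ) : ZMod a2) = (M : ZMod a2) := by
    push_cast
    rw [ZMod.natCast_val, ZMod.cast_id, ← mul_assoc, ZMod.coe_mul_inv_eq_one a1 hcop, one_mul]
  have hx0mod : a1 * x0 ≡ M + a1 * a2 [MOD a2] := by
    have h1 : a1 * x0 ≡ M [MOD a2] := (ZMod.natCast_eq_natCast_iff _ _ _).1 hx0cast
    have h2 : M ≡ M + a1 * a2 [MOD a2] := by
      unfold Nat.ModEq
      rw [mul_comm a1 a2, ← Nat.add_mul_mod_self_left]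
    exact h1.trans h2
  have hx0le : a1 * x0 ≤ M + a1 * a2 :=
    le_trans (le_of_lt ((mul_lt_mul_iff_right₀ ha1).2 hx0lt)) (Nat.le_add_left _ _)
  have hdvd : a2 ∣ M + a1 * a2 - a1 * x0 := (Nat.modEq_iff_dvd' hx0le).1 hx0mod
  set y0 : ℕ := (M + a1 * a2 - a1 * x0) / a2 with hy0def
  have hy0 : a1 * x0 + a2 * y0 = M + a1 * a2 := by
    rw [hy0def, Nat.mul_div_cancel' hdvd]
    omega
  -- split A
  have hsplit : Nat.card A = Nat.card {p : A // p.1.1 < a2} + Nat.card {p : A // ¬ p.1.1 < a2} := by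
    rw [← Nat.card_sum]
    exact Nat.card_congr (Equiv.sumCompl _).symm
  -- small part has exactly one element
  have hsmall : Nat.card {p : A // p.1.1 < a2} = 1 := by
    rw [Nat.card_eq_one_iff_unique]
    constructor
    · constructor
      rintro ⟨⟨⟨x, y⟩, he⟩, hx⟩ ⟨⟨⟨x', y'⟩, he'⟩, hx'⟩
      simp only at hx hx'
      have e1 : a1 * x + a2 * y = a1 * x' + a2 * y' := by rw [he, he']
      have m1 : a1 * x ≡ a1 * x' [MOD a2] := by
        unfold Nat.ModEq
        calc a1 * x % a2 = (a1 * x + a2 * y) % a2 := by rw [Nat.add_mul_mod_self_left]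
        _ = (a1 * x' + a2 * y') % a2 := by rw [e1]
        _ = a1 * x' % a2 := by rw [Nat.add_mul_mod_self_left]
      have m2 : x ≡ x' [MOD a2] := Nat.ModEq.cancel_left_of_coprime hcop.symm m1
      have hxx : x = x' := Nat.ModEq.eq_of_lt_of_lt m2 hx hx'
      have hyy : y = y' := by
        subst hxx
        have : a2 * y = a2 * y' := by omega
        exact Nat.eq_of_mul_eq_mul_left ha2 this
      subst hxx; subst hyy; rfl
    · exact ⟨⟨⟨(x0, y0), hy0⟩, hx0lt⟩⟩
  -- large part is R2 M
  have hlarge : Nat.card {p : A // ¬ p.1.1 < a2} = R2 a1 a2 M := by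
    rw [R2]
    apply Nat.card_congr
    refine ⟨fun p => ⟨(p.1.1.1 - a2, p.1.1.2), ?_⟩, fun q => ⟨⟨(q.1.1 + a2, q.1.2), ?_⟩, ?_⟩, ?_, ?_⟩
    · obtain ⟨⟨⟨x, y⟩, he⟩, hx⟩ := p
      simp only [not_lt] at hx
      dsimp only at he ⊢
      have hexp : a1 * x = a1 * (x - a2) + a1 * a2 := by
        rw [← Nat.mul_add, Nat.sub_add_cancel hx]
      have := he
      rw [hexp] at this
      omega
    · obtain ⟨⟨x, y⟩, he⟩ := q
      dsimp only at he ⊢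
      have : a1 * (x + a2) = a1 * x + a1 * a2 := by ring
      rw [this]
      omega
    · simp
    · rintro ⟨⟨⟨x, y⟩, he⟩, hx⟩
      simp only [not_lt] at hx
      apply Subtype.ext
      apply Subtype.ext
      simp only
      ext <;> simp <;> omega
    · rintro ⟨⟨x, y⟩, he⟩
      apply Subtype.ext
      simp
  rw [R2, hsplit, hsmall, hlarge]
  omega

lemma R2_add_mul {a1 a2 : ℕ} (ha1 : 0 < a1) (ha2 : 0 < a2) (hcop : Nat.Coprime a1 a2)
    (s : ℕ) : ∀ k : ℕ, R2 a1 a2 (s + k * (a1 * a2)) = R2 a1 a2 s + k := by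
  intro k
  induction k with
  | zero => simp
  | succ n ih =>
      have : s + (n + 1) * (a1 * a2) = (s + n * (a1 * a2)) + a1 * a2 := by ring
      rw [this, R2_step ha1 ha2 hcop, ih]
      omega

lemma R2_pos {a1 a2 : ℕ} (ha1 : 0 < a1) (ha2 : 0 < a2) {s : ℕ}
    (h : ∃ x y, a1 * x + a2 * y = s) : 1 ≤ R2 a1 a2 s := by
  haveI := finite_R2 ha1 ha2 s
  obtain ⟨x, y, hxy⟩ := h
  haveI : Nonempty {p : ℕ × ℕ // a1 * p.1 + a2 * p.2 = s} := ⟨⟨(x, y), hxy⟩⟩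
  exact Nat.card_pos

lemma rep_of_big {a1 a2 : ℕ} (ha1 : 0 < a1) (ha2 : 0 < a2) (hcop : Nat.Coprime a1 a2)
    {s : ℕ} (h : a1 * a2 < s + a1 + a2) : ∃ x y, a1 * x + a2 * y = s := by
  by_cases h1 : a1 = 1
  · exact ⟨s, 0, by simp [h1]⟩
  by_cases h2 : a2 = 1
  · exact ⟨0, s, by simp [h2]⟩
  have h1' : 1 < a1 := by omega
  have h2' : 1 < a2 := by omega
  have hfrob := (frobeniusNumber_pair hcop h1' h2').2
  have hma : a1 + a2 ≤ a1 * a2 := Nat.add_le_mul h1' h2'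
  have hgt : a1 * a2 - a1 - a2 < s := by omega
  have hs : s ∈ AddSubmonoid.closure ({a1, a2} : Set ℕ) := by
    by_contra hc
    exact absurd (hfrob hc) (by omega)
  rw [AddSubmonoid.mem_closure_pair] at hs
  obtain ⟨x, y, hxy⟩ := hs
  exact ⟨x, y, by rw [← hxy]; simp [smul_eq_mul]; ring⟩

lemma R2_frob_zero {a1 a2 : ℕ} (h1 : 1 < a1) (h2 : 1 < a2) (hcop : Nat.Coprime a1 a2) :
    R2 a1 a2 (a1 * a2 - a1 - a2) = 0 := by
  have hfrob := (frobeniusNumber_pair hcop h1 h2).1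
  rw [Set.mem_setOf_eq, AddSubmonoid.mem_closure_pair] at hfrob
  rw [R2, Nat.card_eq_zero]
  left
  rw [isEmpty_subtype]
  rintro ⟨x, y⟩ hxy
  exact hfrob ⟨x, y, by simp only [smul_eq_mul]; rw [mul_comm x a1, mul_comm y a2]; exact hxy⟩

lemma R2_two_d {a1 a2 : ℕ} (ha1 : 0 < a1) (ha2 : 0 < a2) (hcop : Nat.Coprime a1 a2) :
    R2 a1 a2 (a1 * (a2 - 1) + a2 * (a1 - 1)) = 1 := by
  rw [R2, Nat.card_eq_one_iff_unique]
  constructor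
  · constructor
    rintro ⟨⟨x, y⟩, he⟩ ⟨⟨x', y'⟩, he'⟩
    dsimp only at he he'
    have key : ∀ u v : ℕ, a1 * u + a2 * v = a1 * (a2 - 1) + a2 * (a1 - 1) →
        u = a2 - 1 ∧ v = a1 - 1 := by
      intro u v huv
      have hexp : a1 * (u + 1) + a2 * (v + 1) = 2 * (a1 * a2) := by
        have e1 : a1 * (u + 1) = a1 * u + a1 := by ring
        have e2 : a2 * (v + 1) = a2 * v + a2 := by ring
        have e3 : a1 * (a2 - 1) = a1 * a2 - a1 := by rw [Nat.mul_sub_one]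
        have e4 : a2 * (a1 - 1) = a1 * a2 - a2 := by rw [Nat.mul_sub_one, mul_comm]
        have h12 : a1 ≤ a1 * a2 := Nat.le_mul_of_pos_right _ ha2
        have h21 : a2 ≤ a1 * a2 := Nat.le_mul_of_pos_left _ ha1
        omega
      have hd1 : a2 ∣ a1 * (u + 1) := by
        have : a2 ∣ a1 * (u + 1) + a2 * (v + 1) := by
          rw [hexp]; exact ⟨2 * a1, by ring⟩
        exact (Nat.dvd_add_right (Dvd.intro _ rfl)).1 (by rwa [add_comm] at this)
      have hd1' : a2 ∣ u + 1 := (Nat.Coprime.dvd_of_dvd_mul_left hcop.symm) hd1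
      have hd2 : a1 ∣ a2 * (v + 1) := by
        have : a1 ∣ a1 * (u + 1) + a2 * (v + 1) := by
          rw [hexp]; exact ⟨2 * a2, by ring⟩
        exact (Nat.dvd_add_right (Dvd.intro _ rfl)).1 this
      have hd2' : a1 ∣ v + 1 := (Nat.Coprime.dvd_of_dvd_mul_left hcop) hd2
      obtain ⟨k, hk⟩ := hd1'
      obtain ⟨l, hl⟩ := hd2'
      have hkl : k + l = 2 := by
        have h2' : (a1 * a2) * (k + l) = (a1 * a2) * 2 := by
          have e : a1 * (a2 * k) + a2 * (a1 * l) = (a1 * a2) * (k + l) := by ring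
          rw [← e, ← hk, ← hl, hexp]; ring
        exact Nat.eq_of_mul_eq_mul_left (Nat.mul_pos ha1 ha2) h2'
      have hk1 : 1 ≤ k := by
        rcases Nat.eq_zero_or_pos k with h | h
        · rw [h, mul_zero] at hk; omega
        · exact h
      have hl1 : 1 ≤ l := by
        rcases Nat.eq_zero_or_pos l with h | h
        · rw [h, mul_zero] at hl; omega
        · exact h
      have hkk : k = 1 := by omega
      have hll : l = 1 := by omega
      rw [hkk, mul_one] at hk
      rw [hll, mul_one] at hl
      omega
    obtain ⟨hu, hv⟩ := key x y he
    obtain ⟨hu', hv'⟩ := key x' y' he'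
    apply Subtype.ext
    simp [hu, hv, hu', hv']
  · exact ⟨⟨(a2 - 1, a1 - 1), rfl⟩⟩

lemma R3_of_lt {a1 a2 c : ℕ} (ha1 : 0 < a1) (ha2 : 0 < a2) {M : ℕ} (h : M < c) :
    R3 a1 a2 c M = R2 a1 a2 M := by
  rw [R3, R2]
  apply Nat.card_congr
  have hz : ∀ t : ℕ × ℕ × ℕ, a1 * t.1 + a2 * t.2.1 + c * t.2.2 = M → t.2.2 = 0 := by
    rintro ⟨x, y, z⟩ he
    dsimp only at he ⊢
    by_contra hz0
    have : c ≤ c * z := Nat.le_mul_of_pos_right c (Nat.pos_of_ne_zero hz0)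
    omega
  refine ⟨fun t => ⟨(t.1.1, t.1.2.1), ?_⟩, fun p => ⟨(p.1.1, p.1.2, 0), ?_⟩, ?_, ?_⟩
  · obtain ⟨⟨x, y, z⟩, he⟩ := t
    have h0 := hz _ he
    dsimp only at he h0 ⊢
    rw [h0, mul_zero] at he
    omega
  · obtain ⟨⟨x, y⟩, he⟩ := p
    dsimp only at he ⊢
    rw [mul_zero]
    omega
  · rintro ⟨⟨x, y, z⟩, he⟩
    have h0 := hz _ he
    dsimp only at h0
    apply Subtype.ext
    simp [h0]
  · rintro ⟨⟨x, y⟩, he⟩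
    rfl

lemma R3_rec {a1 a2 c : ℕ} (ha1 : 0 < a1) (ha2 : 0 < a2) (hc : 0 < c) (M : ℕ) :
    R3 a1 a2 c (M + c) = R2 a1 a2 (M + c) + R3 a1 a2 c M := by
  classical
  haveI F1 := finite_R3 ha1 ha2 hc (M + c)
  haveI F2 := finite_R3 ha1 ha2 hc M
  haveI F3 := finite_R2 ha1 ha2 (M + c)
  set A := {t : ℕ × ℕ × ℕ // a1 * t.1 + a2 * t.2.1 + c * t.2.2 = M + c} with hA
  have hsplit : Nat.card A = Nat.card {t : A // t.1.2.2 = 0} + Nat.card {t : A // ¬ t.1.2.2 = 0} := by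
    rw [← Nat.card_sum]
    exact Nat.card_congr (Equiv.sumCompl _).symm
  have hzero : Nat.card {t : A // t.1.2.2 = 0} = R2 a1 a2 (M + c) := by
    rw [R2]
    apply Nat.card_congr
    refine ⟨fun t => ⟨(t.1.1.1, t.1.1.2.1), ?_⟩, fun p => ⟨⟨(p.1.1, p.1.2, 0), ?_⟩, rfl⟩, ?_, ?_⟩
    · obtain ⟨⟨⟨x, y, z⟩, he⟩, h0⟩ := t
      dsimp only at he h0 ⊢
      rw [h0, mul_zero] at he
      omega
    · obtain ⟨⟨x, y⟩, he⟩ := p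
      dsimp only at he ⊢
      rw [mul_zero]
      omega
    · rintro ⟨⟨⟨x, y, z⟩, he⟩, h0⟩
      dsimp only at h0
      apply Subtype.ext
      apply Subtype.ext
      simp [h0]
    · rintro ⟨⟨x, y⟩, he⟩
      rfl
  have hpos : Nat.card {t : A // ¬ t.1.2.2 = 0} = R3 a1 a2 c M := by
    rw [R3]
    apply Nat.card_congr
    refine ⟨fun t => ⟨(t.1.1.1, t.1.1.2.1, t.1.1.2.2 - 1), ?_⟩,
      fun s => ⟨⟨(s.1.1, s.1.2.1, s.1.2.2 + 1), ?_⟩, ?_⟩, ?_, ?_⟩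
    · obtain ⟨⟨⟨x, y, z⟩, he⟩, h0⟩ := t
      dsimp only at he h0 ⊢
      have hz1 : 1 ≤ z := Nat.pos_of_ne_zero h0
      have : c * z = c * (z - 1) + c := by
        rw [← Nat.mul_succ]
        congr 1
        omega
      omega
    · obtain ⟨⟨x, y, z⟩, he⟩ := s
      dsimp only at he ⊢
      have : c * (z + 1) = c * z + c := by ring
      omega
    · obtain ⟨⟨x, y, z⟩, he⟩ := s
      simp
    · rintro ⟨⟨⟨x, y, z⟩, he⟩, h0⟩
      dsimp only at h0
      apply Subtype.ext
      apply Subtype.ext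
      have hz1 : 1 ≤ z := Nat.pos_of_ne_zero h0
      simp only
      ext <;> simp <;> omega
    · rintro ⟨⟨x, y, z⟩, he⟩
      rfl
  rw [R3, hsplit, hzero, hpos]

lemma R3_ge_R2 {a1 a2 c : ℕ} (ha1 : 0 < a1) (ha2 : 0 < a2) (hc : 0 < c) (M : ℕ) :
    R2 a1 a2 M ≤ R3 a1 a2 c M := by
  rcases lt_or_ge M c with h | h
  · rw [R3_of_lt ha1 ha2 h]
  · obtain ⟨u, hu⟩ : ∃ u, M = u + c := ⟨M - c, by omega⟩
    rw [hu, R3_rec ha1 ha2 hc]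
    exact Nat.le_add_right _ _

lemma repCount_eq_R3 (a1 a2 c M : ℕ) : repCount ![a1, a2, c] M = R3 a1 a2 c M := by
  rw [repCount, R3]
  apply Nat.card_congr
  refine ⟨fun x => ⟨(x.1 0, x.1 1, x.1 2), ?_⟩, fun t => ⟨![t.1.1, t.1.2.1, t.1.2.2], ?_⟩, ?_, ?_⟩
  · have h := x.2
    rw [Fin.sum_univ_three] at h
    simpa using h
  · rw [Fin.sum_univ_three]
    simpa using t.2
  · intro x
    apply Subtype.ext
    funext i
    fin_cases i <;> simp
  · intro t
    apply Subtype.ext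
    simp

/-- Third part of the Corollary: `g_{m+2}(a₁, a₂, m·a₁·a₂) = (m+2)·a₁·a₂ − a₁ − a₂`. -/
theorem gFrob_succ_succ_of_triple (a1 a2 : ℕ) (ha1 : 0 < a1) (ha2 : 0 < a2)
    (hcop : Nat.Coprime a1 a2) (m : ℕ) (hm : 0 < m) :
    (gFrob ![a1, a2, m * a1 * a2] (m + 2) : ℤ) = (m + 2) * a1 * a2 - a1 - a2 := by
  set d : ℕ := a1 * a2 with hd
  set N : ℕ := m * d with hN
  have hdpos : 0 < d := Nat.mul_pos ha1 ha2
  have hNpos : 0 < N := Nat.mul_pos hm hdpos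
  set b2 : ℕ := a1 * (a2 - 1) + a2 * (a1 - 1) with hb2
  have e3 : a1 * (a2 - 1) = a1 * a2 - a1 := by rw [Nat.mul_sub_one]
  have e4 : a2 * (a1 - 1) = a1 * a2 - a2 := by rw [Nat.mul_sub_one, mul_comm]
  have h12 : a1 ≤ d := Nat.le_mul_of_pos_right _ ha2
  have h21 : a2 ≤ d := Nat.le_mul_of_pos_left _ ha1
  have hd1 : a1 + a2 ≤ d + 1 := by
    have h5 : a2 - 1 ≤ a1 * (a2 - 1) := Nat.le_mul_of_pos_left _ ha1
    omega
  have hb2val : b2 + a1 + a2 = 2 * d := by rw [hb2, e3, e4]; omega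
  set G : ℕ := b2 + N with hG
  -- R2 value at G
  have r2b2 : R2 a1 a2 b2 = 1 := R2_two_d ha1 ha2 hcop
  have r2G : R2 a1 a2 G = m + 1 := by
    have : G = b2 + m * (a1 * a2) := by rw [hG, hN, hd]
    rw [this, R2_add_mul ha1 ha2 hcop, r2b2]
    omega
  -- R3 value at b2
  have r3b2 : R3 a1 a2 N b2 = 1 := by
    rcases lt_or_ge b2 N with hlt | hge
    · rw [R3_of_lt ha1 ha2 hlt, r2b2]
    · -- N ≤ b2 < 2d forces m = 1, and d ≤ b2, so a1, a2 ≥ 2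
      have hdN : d ≤ N := Nat.le_mul_of_pos_left _ hm
      have hdb2 : d ≤ b2 := le_trans hdN hge
      have haa : a1 + a2 ≤ d := by omega
      have h1' : 1 < a1 := by
        rcases Nat.lt_or_ge 1 a1 with h | h
        · exact h
        · exfalso
          have : a1 = 1 := by omega
          rw [this, one_mul] at hd
          omega
      have h2' : 1 < a2 := by
        rcases Nat.lt_or_ge 1 a2 with h | h
        · exact h
        · exfalso
          have : a2 = 1 := by omega
          rw [this, mul_one] at hd
          omega
      have hm1 : m = 1 := by
        by_contra hm2
        have : 2 ≤ m := by omega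
        have : 2 * d ≤ N := by
          rw [hN]
          exact Nat.mul_le_mul_right d this
        omega
      have hNd : N = d := by rw [hN, hm1, one_mul]
      set t : ℕ := a1 * a2 - a1 - a2 with ht
      have hb2t : b2 = t + N := by rw [hNd, ht, ← hd]; omega
      have r2t : R2 a1 a2 t = 0 := R2_frob_zero h1' h2' hcop
      have htlt : t < N := by rw [hNd]; omega
      rw [hb2t, R3_rec ha1 ha2 hNpos, R3_of_lt ha1 ha2 htlt, r2t, ← hb2t, r2b2]
  -- R3 value at G
  have r3G : R3 a1 a2 N G = m + 2 := by
    rw [hG, R3_rec ha1 ha2 hNpos, ← hG, r2G, r3b2]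
  -- the upper bound
  have hub : ∀ M : ℕ, G < M → m + 4 ≤ R3 a1 a2 N M := by
    intro M hM
    have hNM : N ≤ M := by omega
    obtain ⟨u, hu⟩ : ∃ u, M = u + N := ⟨M - N, by omega⟩
    have hbu : b2 < u := by omega
    have hud : d ≤ u := by omega
    obtain ⟨s, hs⟩ : ∃ s, u = s + d := ⟨u - d, by omega⟩
    have hda : a1 * a2 = d := hd.symm
    have hsrep : ∃ x y, a1 * x + a2 * y = s :=
      rep_of_big ha1 ha2 hcop (by omega)
    have hr2s : 1 ≤ R2 a1 a2 s := R2_pos ha1 ha2 hsrep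
    have hr2u : 2 ≤ R2 a1 a2 u := by
      have hu1 : u = s + 1 * (a1 * a2) := by rw [one_mul, hda]; omega
      rw [hu1, R2_add_mul ha1 ha2 hcop]
      omega
    have hr2M : R2 a1 a2 M = R2 a1 a2 u + m := by
      have hM1 : M = u + m * (a1 * a2) := by rw [hu, hN, hd]
      rw [hM1, R2_add_mul ha1 ha2 hcop]
    have hr3u : R2 a1 a2 u ≤ R3 a1 a2 N u := R3_ge_R2 ha1 ha2 hNpos u
    rw [hu, R3_rec ha1 ha2 hNpos, ← hu, hr2M]
    omega
  -- identify the triple coefficient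
  have hcoef : m * a1 * a2 = N := by rw [hN, hd]; ring
  -- G is the greatest element of the set
  have hgreat : IsGreatest {M : ℕ | repCount ![a1, a2, m * a1 * a2] M = m + 2} G := by
    constructor
    · show repCount ![a1, a2, m * a1 * a2] G = m + 2
      rw [repCount_eq_R3, hcoef, r3G]
    · intro M hM
      rw [Set.mem_setOf_eq, repCount_eq_R3, hcoef] at hM
      by_contra hc
      push_neg at hc
      have := hub M hc
      omega
  have hsup : gFrob ![a1, a2, m * a1 * a2] (m + 2) = G := hgreat.csSup_eq
  rw [hsup, hG, hb2, hN, hd]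
  push_cast [Nat.cast_sub ha1, Nat.cast_sub ha2]
  ring
end

section
/- Let m be a positive integer. Then no nonnegative integer has exactly m + 1 representations by the triple (1, 1, m); that is, there is no nonnegative integer n for which the number of triples (x_1, x_2, x_3) of nonnegative integers with x_1 + x_2 + m·x_3 = n equals m + 1. -/
/-- No nonnegative integer has exactly `m + 1` representations by `(1, 1, m)`. -/
theorem no_rep_count_eq_succ (m : ℕ) (hm : 0 < m) :
    ¬ ∃ n : ℕ, Nat.card {x : ℕ × ℕ × ℕ // x.1 + x.2.1 + m * x.2.2 = n} = m + 1 := by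
  rintro ⟨n, hn⟩
  have hfin : Finite {x : ℕ × ℕ × ℕ // x.1 + x.2.1 + m * x.2.2 = n} := by
    apply Finite.of_injective
      (fun x : {x : ℕ × ℕ × ℕ // x.1 + x.2.1 + m * x.2.2 = n} =>
        ((⟨x.1.1, by have := x.2; omega⟩ : Fin (n+1)),
         (⟨x.1.2.1, by have := x.2; omega⟩ : Fin (n+1)),
         (⟨x.1.2.2, by have h := x.2; have : x.1.2.2 ≤ m * x.1.2.2 := Nat.le_mul_of_pos_left _ hm; omega⟩ : Fin (n+1))))
    rintro ⟨⟨a, b, c⟩, h1⟩ ⟨⟨a', b', c'⟩, h2⟩ h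
    simp only [Fin.mk.injEq, Prod.mk.injEq] at h
    simp_all
  rcases lt_or_ge n m with hlt | hge
  · -- every representation has x₃ = 0, so exactly n+1 < m+1 representations
    have e : {x : ℕ × ℕ × ℕ // x.1 + x.2.1 + m * x.2.2 = n} ≃ Fin (n+1) :=
      { toFun := fun x => ⟨x.1.1, by have := x.2; omega⟩
        invFun := fun k => ⟨(k.1, n - k.1, 0), by have := k.2; dsimp only; omega⟩
        left_inv := by
          rintro ⟨⟨a, b, c⟩, h⟩
          dsimp only at h
          have hc : c = 0 := by
            by_contra hc
            have : m ≤ m * c := Nat.le_mul_of_pos_right _ (Nat.pos_of_ne_zero hc)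
            omega
          subst hc
          apply Subtype.ext
          dsimp only
          simp only [Prod.mk.injEq]
          rw [Nat.mul_zero] at h
          refine ⟨trivial, ?_, trivial⟩
          omega
        right_inv := by rintro ⟨k, hk⟩; rfl }
    have := Nat.card_eq_of_equiv_fin e
    omega
  · -- n ≥ m : at least n+2 representations
    have inj : Function.Injective
        (fun k : Option (Fin (n+1)) =>
          (match k with
            | none => ⟨(n - m, 0, 1), by dsimp only; omega⟩
            | some k => ⟨(k.1, n - k.1, 0), by have := k.2; dsimp only; omega⟩ :
            {x : ℕ × ℕ × ℕ // x.1 + x.2.1 + m * x.2.2 = n})) := by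
      rintro (_ | ⟨a, ha⟩) (_ | ⟨b, hb⟩) h <;>
        simp only [Subtype.mk.injEq, Prod.mk.injEq] at h <;> simp_all
    have hle := Nat.card_le_card_of_injective _ inj
    simp [Nat.card_eq_fintype_card] at hle
    omega
end
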